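/- Let κ* > 1 and define Ψ on (0,1) by (d/du) ln Ψ(u) = 1/(u(κ* Q(u) - 1)), where Q(u) = 3(1-(1-u)^{1/3})/u. Then with p = 1/(κ*-1), Ψ(u) = α(u) u^p where α extends to a function on [0,1) that is decreasing and continuous at 0 with α(0) > 0. In particular Ψ(u)/u^p tends to a positive limit as u → 0⁺. -/

import Mathlib

open Set Filter Topology Real

/-- `Q(u) = 3 (1 - (1-u)^{1/3})/u`, extended by `Q(0) = 1`. -/
noncomputable def Qfun (u : ℝ) : ℝ :=
  if u = 0 then 1 else 3 * (1 - (1 - u) ^ ((1:ℝ)/3)) / u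

lemma cube_rpow {u : ℝ} (hu : u ≤ 1) : ((1 - u) ^ ((1:ℝ)/3)) ^ (3:ℕ) = 1 - u := by
  rw [← Real.rpow_natCast ((1-u) ^ ((1:ℝ)/3)) 3, ← Real.rpow_mul (by linarith)]
  norm_num

lemma Qfun_ge_one {u : ℝ} (hu : u ∈ Ioo (0:ℝ) 1) : 1 ≤ Qfun u := by
  obtain ⟨h0, h1⟩ := hu
  rw [Qfun, if_neg h0.ne']
  set a := (1 - u) ^ ((1:ℝ)/3) with ha
  have ha0 : 0 ≤ a := Real.rpow_nonneg (by linarith) _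
  have ha3 : a ^ (3:ℕ) = 1 - u := cube_rpow h1.le
  have hle : a ≤ 1 - u/3 := by
    by_contra hc
    push_neg at hc
    have : (1 - u/3) ^ (3:ℕ) < a ^ (3:ℕ) :=
      pow_lt_pow_left₀ hc (by linarith) (by norm_num)
    rw [ha3] at this
    nlinarith [mul_pos h0 h0, sq_nonneg u, mul_pos (mul_pos h0 h0) h0]
  rw [le_div_iff₀ h0]
  nlinarith

lemma Qfun_le {u : ℝ} (hu : u ∈ Ioo (0:ℝ) (1/2)) : Qfun u ≤ 1 + 3*u := by
  obtain ⟨h0, h1⟩ := hu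
  rw [Qfun, if_neg h0.ne']
  set a := (1 - u) ^ ((1:ℝ)/3) with ha
  have ha0 : 0 ≤ a := Real.rpow_nonneg (by linarith) _
  have ha3 : a ^ (3:ℕ) = 1 - u := cube_rpow (by linarith)
  have hge : 1 - u/3 - u^2 ≤ a := by
    by_contra hc
    push_neg at hc
    have hb0 : 0 ≤ 1 - u/3 - u^2 := by nlinarith
    have : a ^ (3:ℕ) < (1 - u/3 - u^2) ^ (3:ℕ) :=
      pow_lt_pow_left₀ hc ha0 (by norm_num)
    rw [ha3] at this
    nlinarith [mul_pos h0 h0, sq_nonneg u, mul_pos (mul_pos h0 h0) h0,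
      mul_pos (mul_pos (mul_pos h0 h0) h0) h0]
  rw [div_le_iff₀ h0]
  nlinarith

theorem selfsimilar_profile_power_behavior
    (κ p : ℝ) (hκ : 1 < κ) (hp : p = 1 / (κ - 1))
    (Ψ : ℝ → ℝ) (hΨ_pos : ∀ u ∈ Set.Ioo (0:ℝ) 1, 0 < Ψ u)
    (hΨ : ∀ u ∈ Set.Ioo (0:ℝ) 1,
      HasDerivAt (fun w => Real.log (Ψ w)) (1 / (u * (κ * Qfun u - 1))) u) :
    ∃ α : ℝ → ℝ,
      (∀ u ∈ Set.Ioo (0:ℝ) 1, Ψ u = α u * u ^ p) ∧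
      AntitoneOn α (Set.Ico 0 1) ∧
      ContinuousWithinAt α (Set.Ici 0) 0 ∧
      0 < α 0 ∧
      Tendsto (fun u => Ψ u / u ^ p) (𝓝[>] (0:ℝ)) (𝓝 (α 0)) := by
  have hκ1 : (0:ℝ) < κ - 1 := by linarith
  set h : ℝ → ℝ := fun u => Real.log (Ψ u) - p * Real.log u with hh
  -- derivative of h
  set d : ℝ → ℝ := fun u => 1 / (u * (κ * Qfun u - 1)) - p * u⁻¹ with hdd
  have hd : ∀ u ∈ Ioo (0:ℝ) 1, HasDerivAt h (d u) u := fun u hu =>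
    (hΨ u hu).sub ((Real.hasDerivAt_log hu.1.ne').const_mul p)
  -- denominator facts
  have hden : ∀ u ∈ Ioo (0:ℝ) 1, κ - 1 ≤ κ * Qfun u - 1 := by
    intro u hu
    nlinarith [Qfun_ge_one hu]
  -- derivative is nonpositive
  have hd_nonpos : ∀ u ∈ Ioo (0:ℝ) 1, d u ≤ 0 := by
    intro u hu
    have h1 : p * u⁻¹ = 1 / ((κ - 1) * u) := by
      rw [hp]; field_simp
    have h2 : 1 / (u * (κ * Qfun u - 1)) ≤ 1 / ((κ - 1) * u) := by
      apply one_div_le_one_div_of_le (mul_pos hκ1 hu.1)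
      nlinarith [hden u hu, hu.1]
    simp only [hdd]
    rw [h1]
    linarith
  -- antitone
  have hcont : ContinuousOn h (Ioo 0 1) := fun u hu =>
    (hd u hu).continuousAt.continuousWithinAt
  have hAnti : AntitoneOn h (Ioo 0 1) := by
    apply antitoneOn_of_deriv_nonpos (convex_Ioo 0 1) hcont
    · rw [interior_Ioo]
      exact fun u hu => (hd u hu).differentiableAt.differentiableWithinAt
    · rw [interior_Ioo]
      intro u hu
      rw [(hd u hu).deriv]
      exact hd_nonpos u hu
  -- lower bound of derivative near 0
  set M : ℝ := 3 * κ / (κ - 1)^2 with hM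
  have hM0 : 0 ≤ M := by positivity
  have hd_lb : ∀ u ∈ Ioo (0:ℝ) (1/2), 0 ≤ d u + M := by
    intro u hu
    have hu1 : u ∈ Ioo (0:ℝ) 1 := ⟨hu.1, by linarith [hu.2]⟩
    have hQ1 := Qfun_ge_one hu1
    have hQ2 := Qfun_le hu
    have hden' := hden u hu1
    have hupos := hu.1
    have hdpos : 0 < u * (κ * Qfun u - 1) := by nlinarith
    have key : p * u⁻¹ - 1 / (u * (κ * Qfun u - 1))
        = κ * (Qfun u - 1) / ((κ - 1) * (u * (κ * Qfun u - 1))) := by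
      rw [hp]
      have hX : κ * Qfun u - 1 ≠ 0 := (by linarith : 0 < κ * Qfun u - 1).ne'
      have hK : κ - 1 ≠ 0 := hκ1.ne'
      field_simp
      ring
    have hb : κ * (Qfun u - 1) / ((κ - 1) * (u * (κ * Qfun u - 1)))
        ≤ (3 * κ * u) / ((κ - 1) * (u * (κ - 1))) := by
      apply div_le_div₀ (by positivity) (by nlinarith) (by positivity)
      nlinarith [mul_nonneg (mul_nonneg hκ1.le hupos.le) (sub_nonneg.mpr hden')]
    have heq : (3 * κ * u) / ((κ - 1) * (u * (κ - 1))) = M := by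
      rw [hM]; field_simp
    simp only [hdd]
    linarith [key, hb, heq.le, heq.ge]
  -- monotone of h + M·id on (0,1/2)
  have hMono : MonotoneOn (fun u => h u + M * u) (Ioo 0 (1/2)) := by
    have hdM : ∀ u ∈ Ioo (0:ℝ) (1/2), HasDerivAt (fun u => h u + M * u) (d u + M) u := by
      intro u hu
      exact (hd u ⟨hu.1, by linarith [hu.2]⟩).add
        (by simpa using (hasDerivAt_id u).const_mul M)
    apply monotoneOn_of_deriv_nonneg (convex_Ioo 0 (1/2))
      (fun u hu => (hdM u hu).continuousAt.continuousWithinAt)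
    · rw [interior_Ioo]
      exact fun u hu => (hdM u hu).differentiableAt.differentiableWithinAt
    · rw [interior_Ioo]
      intro u hu
      rw [(hdM u hu).deriv]
      exact hd_lb u hu
  -- upper bound for h on (0,1/2)
  have hquarter : (1/4 : ℝ) ∈ Ioo (0:ℝ) (1/2) := by norm_num
  have hbound : ∀ u ∈ Ioo (0:ℝ) (1/2), h u ≤ h (1/4) + M := by
    intro u hu
    rcases le_or_gt u (1/4) with hle | hlt
    · have := hMono hu hquarter hle
      have hMu : 0 ≤ M * u := mul_nonneg hM0 hu.1.le
      nlinarith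
    · have := hAnti (show (1/4:ℝ) ∈ Ioo (0:ℝ) 1 by norm_num)
        ⟨hu.1, by linarith [hu.2]⟩ hlt.le
      linarith
  set L : ℝ := sSup (h '' Ioo 0 (1/2)) with hL
  have hbdd : BddAbove (h '' Ioo (0:ℝ) (1/2)) := by
    refine ⟨h (1/4) + M, ?_⟩
    rintro _ ⟨u, hu, rfl⟩
    exact hbound u hu
  have hTend : Tendsto h (𝓝[>] 0) (𝓝 L) :=
    AntitoneOn.tendsto_nhdsWithin_Ioo_right ⟨1/4, hquarter⟩
      (hAnti.mono (fun x hx => ⟨hx.1, by linarith [hx.2]⟩)) hbdd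
  have hL_ge : ∀ u ∈ Ioo (0:ℝ) 1, h u ≤ L := by
    intro u hu
    have hv : min u (1/4) ∈ Ioo (0:ℝ) (1/2) := by
      constructor
      · exact lt_min hu.1 (by norm_num)
      · exact lt_of_le_of_lt (min_le_right _ _) (by norm_num)
    have h1 : h u ≤ h (min u (1/4)) :=
      hAnti ⟨hv.1, by linarith [hv.2]⟩ hu (min_le_left _ _)
    exact h1.trans (le_csSup hbdd (mem_image_of_mem _ hv))
  -- define α
  have hα_eq : ∀ u ∈ Ioo (0:ℝ) 1,
      (if u ≤ 0 then Real.exp L else Ψ u / u ^ p) = Real.exp (h u) := by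
    intro u hu
    rw [if_neg (not_le.mpr hu.1)]
    simp only [hh]
    rw [Real.exp_sub, Real.exp_log (hΨ_pos u hu), Real.rpow_def_of_pos hu.1 p,
      mul_comm (Real.log u) p]
  have hTendα : Tendsto (fun u => if u ≤ 0 then Real.exp L else Ψ u / u ^ p)
      (𝓝[>] (0:ℝ)) (𝓝 (Real.exp L)) := by
    apply Tendsto.congr' _ ((Real.continuous_exp.tendsto L).comp hTend)
    filter_upwards [Ioo_mem_nhdsGT_of_mem
      (by constructor <;> norm_num : (0:ℝ) ∈ Ico (0:ℝ) 1)] with u hu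
    exact (hα_eq u hu).symm
  refine ⟨fun u => if u ≤ 0 then Real.exp L else Ψ u / u ^ p, ?_, ?_, ?_, ?_, ?_⟩
  · intro u hu
    beta_reduce
    rw [if_neg (not_le.mpr hu.1), div_mul_cancel₀ _ (Real.rpow_pos_of_pos hu.1 p).ne']
  · intro x hx y hy hxy
    beta_reduce
    rcases eq_or_lt_of_le hx.1 with hx0 | hx0
    · rcases eq_or_lt_of_le hy.1 with hy0 | hy0
      · rw [← hx0, ← hy0]
      · rw [← hx0, if_pos le_rfl, hα_eq y ⟨hy0, hy.2⟩]
        exact Real.exp_le_exp.mpr (hL_ge y ⟨hy0, hy.2⟩)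
    · have hy0 : 0 < y := lt_of_lt_of_le hx0 hxy
      rw [hα_eq x ⟨hx0, hx.2⟩, hα_eq y ⟨hy0, hy.2⟩]
      exact Real.exp_le_exp.mpr (hAnti ⟨hx0, hx.2⟩ ⟨hy0, hy.2⟩ hxy)
  · rw [← continuousWithinAt_Ioi_iff_Ici]
    have h0 : (fun u => if u ≤ 0 then Real.exp L else Ψ u / u ^ p) 0 = Real.exp L := by
      norm_num
    unfold ContinuousWithinAt
    rw [h0]
    exact hTendα
  · norm_num [Real.exp_pos]
  · have heq : (fun u => if u ≤ 0 then Real.exp L else Ψ u / u ^ p)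
        =ᶠ[𝓝[>] (0:ℝ)] fun u => Ψ u / u ^ p := by
      filter_upwards [self_mem_nhdsWithin] with u hu
      rw [if_neg (not_le.mpr hu)]
    have := Tendsto.congr' heq hTendα
    simpa using this
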